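/- Let X be a bounded linear operator on a complex Hilbert space H and let K be a nonempty set of unit vectors. With ber(T) = sup_{k∈K} |⟨T k, k⟩| and ‖T‖_ber = sup_{k,l∈K} |⟨T k, l⟩|, one has ‖X*X‖_ber = ber(X*X). -/

import Mathlib

open ContinuousLinearMap

noncomputable def berNum {H : Type*} [NormedAddCommGroup H] [InnerProductSpace ℂ H]
    (K : Set H) (T : H →L[ℂ] H) : ℝ :=
  sSup {x : ℝ | ∃ k ∈ K, x = ‖(inner ℂ (T k) k : ℂ)‖}

noncomputable def berNorm {H : Type*} [NormedAddCommGroup H] [InnerProductSpace ℂ H]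
    (K : Set H) (T : H →L[ℂ] H) : ℝ :=
  sSup {x : ℝ | ∃ k ∈ K, ∃ l ∈ K, x = ‖(inner ℂ (T k) l : ℂ)‖}

theorem berNorm_adjoint_mul_self {H : Type*} [NormedAddCommGroup H] [InnerProductSpace ℂ H] [CompleteSpace H]
    (X : H →L[ℂ] H) (K : Set H) (hK : K.Nonempty) (hK1 : ∀ k ∈ K, ‖k‖ = 1) :
    berNorm K (adjoint X * X) = berNum K (adjoint X * X) := by
  set T := adjoint X * X with hT
  have hinner : ∀ k l : H, (inner ℂ (T k) l : ℂ) = inner ℂ (X k) (X l) := by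
    intro k l
    simp [hT, adjoint_inner_left]
  have hdiag : ∀ k : H, ‖(inner ℂ (T k) k : ℂ)‖ = ‖X k‖ ^ 2 := by
    intro k
    rw [hinner, inner_self_eq_norm_sq_to_K]
    simp [sq_abs]
  have hbN : BddAbove {x : ℝ | ∃ k ∈ K, x = ‖(inner ℂ (T k) k : ℂ)‖} := by
    refine ⟨‖X‖ ^ 2, ?_⟩
    rintro x ⟨k, hk, rfl⟩
    rw [hdiag]
    have := X.le_opNorm k
    rw [hK1 k hk, mul_one] at this
    exact pow_le_pow_left₀ (norm_nonneg _) this 2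
  have hneN : {x : ℝ | ∃ k ∈ K, x = ‖(inner ℂ (T k) k : ℂ)‖}.Nonempty := by
    obtain ⟨k, hk⟩ := hK
    exact ⟨_, k, hk, rfl⟩
  have hbB : BddAbove {x : ℝ | ∃ k ∈ K, ∃ l ∈ K, x = ‖(inner ℂ (T k) l : ℂ)‖} := by
    refine ⟨‖X‖ ^ 2, ?_⟩
    rintro x ⟨k, hk, l, hl, rfl⟩
    rw [hinner]
    have h1 := X.le_opNorm k; rw [hK1 k hk, mul_one] at h1
    have h2 := X.le_opNorm l; rw [hK1 l hl, mul_one] at h2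
    calc ‖(inner ℂ (X k) (X l) : ℂ)‖ ≤ ‖X k‖ * ‖X l‖ := norm_inner_le_norm _ _
      _ ≤ ‖X‖ ^ 2 := by nlinarith [norm_nonneg (X k), norm_nonneg (X l)]
  unfold berNorm berNum
  apply le_antisymm
  · have hneB : {x : ℝ | ∃ k ∈ K, ∃ l ∈ K, x = ‖(inner ℂ (T k) l : ℂ)‖}.Nonempty :=
      ⟨_, hK.choose, hK.choose_spec, hK.choose, hK.choose_spec, rfl⟩
    apply csSup_le hneB
    rintro x ⟨k, hk, l, hl, rfl⟩
    have memk : ‖X k‖ ^ 2 ∈ {x : ℝ | ∃ k ∈ K, x = ‖(inner ℂ (T k) k : ℂ)‖} :=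
      ⟨k, hk, (hdiag k).symm⟩
    have meml : ‖X l‖ ^ 2 ∈ {x : ℝ | ∃ k ∈ K, x = ‖(inner ℂ (T k) k : ℂ)‖} :=
      ⟨l, hl, (hdiag l).symm⟩
    have hk' := le_csSup hbN memk
    have hl' := le_csSup hbN meml
    rw [hinner]
    calc ‖(inner ℂ (X k) (X l) : ℂ)‖ ≤ ‖X k‖ * ‖X l‖ := norm_inner_le_norm _ _
      _ ≤ max (‖X k‖ ^ 2) (‖X l‖ ^ 2) := by
          rcases le_total ‖X k‖ ‖X l‖ with h | h
          · exact le_max_of_le_right (by nlinarith [norm_nonneg (X k)])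
          · exact le_max_of_le_left (by nlinarith [norm_nonneg (X l)])
      _ ≤ _ := max_le hk' hl'
  · apply csSup_le_csSup hbB hneN
    rintro x ⟨k, hk, rfl⟩
    exact ⟨k, hk, k, hk, rfl⟩
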